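/- For every T₀ L-topological space (X, τ): the space (pt_L(τ), φ_L(τ)) is a T₀ L-topological space, the map η_X : (X, τ) → (pt_L(τ), φ_L(τ)) is continuous, and η_X is an epimorphism in L-Top₀. -/
import Mathlib


universe u v

/-- `τ` is an `L`-topology on `X`: a set of `L`-sets closed under arbitrary pointwise
suprema (including the empty one, `⊥`) and finite pointwise infima (including the
empty one, `⊤`). -/
def IsLTop {L : Type*} [Order.Frame L] {X : Type*} (τ : Set (X → L)) : Prop :=
  (∀ S ⊆ τ, sSup S ∈ τ) ∧ ∀ S ⊆ τ, S.Finite → sInf S ∈ τ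

/-- `f` is continuous from `(X, τ)` to `(Y, δ)`. -/
def LCont {L : Type*} [Order.Frame L] {X Y : Type*}
    (τ : Set (X → L)) (δ : Set (Y → L)) (f : X → Y) : Prop :=
  ∀ ν ∈ δ, ν ∘ f ∈ τ

/-- The Sierpinski `L`-topology on `L`: generated by `id`, it consists of the constant
function `⊥`, the identity, and the constant function `⊤`. -/
def sierpinskiLTop (L : Type*) [Order.Frame L] : Set (L → L) :=
  {⊥, id, ⊤}

/-- `(X, τ)` is a T₀ `L`-topological space. -/
def IsT0LTop {L : Type*} [Order.Frame L] {X : Type*} (τ : Set (X → L)) : Prop :=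
  ∀ x y : X, x ≠ y → ∃ μ ∈ τ, μ x ≠ μ y

/-- `f : (X,τ) → (Y,δ)` is an embedding: `f` is injective and `τ = {ν ∘ f | ν ∈ δ}`. -/
def IsLEmbedding {L : Type*} [Order.Frame L] {X Y : Type*}
    (τ : Set (X → L)) (δ : Set (Y → L)) (f : X → Y) : Prop :=
  Function.Injective f ∧ τ = {μ | ∃ ν ∈ δ, μ = ν ∘ f}

/-- The smallest `L`-topology containing a family `ζ` of `L`-sets. -/
def genLTop {L : Type*} [Order.Frame L] {X : Type*} (ζ : Set (X → L)) : Set (X → L) :=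
  ⋂₀ {τ | IsLTop τ ∧ ζ ⊆ τ}

/-- The product `L`-topology on `∀ i, X i`: the smallest `L`-topology containing all
`ν ∘ pᵢ` with `ν ∈ τ i`. -/
def prodLTop {L : Type*} [Order.Frame L] {I : Type*} {X : I → Type*}
    (τ : ∀ i, Set (X i → L)) : Set ((∀ i, X i) → L) :=
  genLTop {μ | ∃ i, ∃ ν ∈ τ i, μ = fun x => ν (x i)}

/-- The product of `I` copies of the Sierpinski `L`-space, `L_S^I`. -/
def sierpinskiPow (L : Type*) [Order.Frame L] (I : Type*) : Set ((I → L) → L) :=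
  prodLTop fun _ : I => sierpinskiLTop L

/-- The subspace `L`-topology on `M ⊆ Y`: restrictions of members of `δ`. -/
def subLTop {L : Type*} [Order.Frame L] {Y : Type*} (δ : Set (Y → L)) (M : Set Y) :
    Set (↥M → L) :=
  {ν | ∃ μ ∈ δ, ν = fun y => μ y.1}

/-- Homeomorphism: a continuous bijection with continuous inverse. -/
def IsLHomeo {L : Type*} [Order.Frame L] {X Y : Type*}
    (τ : Set (X → L)) (δ : Set (Y → L)) (f : X → Y) : Prop :=
  LCont τ δ f ∧
    ∃ g : Y → X, LCont δ τ g ∧ Function.LeftInverse g f ∧ Function.RightInverse g f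

/-- Epimorphism in `L`-**Top₀**. -/
def IsLEpiT0 {L : Type*} [Order.Frame L] {X Y : Type*}
    (τ : Set (X → L)) (δ : Set (Y → L)) (f : X → Y) : Prop :=
  ∀ (Z : Type*) (Δ : Set (Z → L)), IsLTop Δ → IsT0LTop Δ →
    ∀ g h : Y → Z, LCont δ Δ g → LCont δ Δ h → g ∘ f = h ∘ f → g = h

/-- The `[ ]`-closure of `M` in `(Y, δ)`: the intersection of the equalizers of all pairs
of continuous maps into T₀ `L`-topological spaces that agree on `M`. -/
def brClosure {L : Type*} [Order.Frame L] {Y : Type*} (δ : Set (Y → L)) (M : Set Y) :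
    Set Y :=
  {y | ∀ (Z : Type*) (Δ : Set (Z → L)), IsLTop Δ → IsT0LTop Δ →
    ∀ g h : Y → Z, LCont δ Δ g → LCont δ Δ h → (∀ m ∈ M, g m = h m) → g y = h y}

/-- `p` is a frame homomorphism from the frame `τ` (ordered pointwise, with pointwise
suprema and finite infima) to `L`: it preserves arbitrary suprema and finite infima. -/
def IsLFrameHom {L : Type*} [Order.Frame L] {X : Type*} (τ : Set (X → L))
    (p : ↥τ → L) : Prop :=
  (∀ (S : Set (X → L)) (hS : S ⊆ τ) (h : sSup S ∈ τ),
    p ⟨sSup S, h⟩ = ⨆ μ : S, p ⟨μ.1, hS μ.2⟩) ∧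
  ∀ (S : Set (X → L)) (hS : S ⊆ τ), S.Finite → ∀ h : sInf S ∈ τ,
    p ⟨sInf S, h⟩ = ⨅ μ : S, p ⟨μ.1, hS μ.2⟩

/-- `pt_L(τ)`: the collection of frame homomorphisms `τ → L`. -/
def LPt {L : Type*} [Order.Frame L] {X : Type*} (τ : Set (X → L)) : Type _ :=
  {p : ↥τ → L // IsLFrameHom τ p}

/-- The `L`-topology `φ_L(τ) = {φ_L(μ) | μ ∈ τ}` on `pt_L(τ)`, where `φ_L(μ)(p) = p(μ)`. -/
def phiTop {L : Type*} [Order.Frame L] {X : Type*} (τ : Set (X → L)) :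
    Set (LPt τ → L) :=
  {ν | ∃ μ : ↥τ, ν = fun p => p.1 μ}

/-- `(X, τ)` is sober: every frame homomorphism `p : τ → L` is given by evaluation at a
unique point of `X`. -/
def IsLSober {L : Type*} [Order.Frame L] {X : Type*} (τ : Set (X → L)) : Prop :=
  ∀ p : ↥τ → L, IsLFrameHom τ p → ∃! x : X, ∀ μ : ↥τ, p μ = μ.1 x

/-- `η_X : X → pt_L(τ)`, `η_X(x)(μ) = μ(x)`. -/
def etaPt {L : Type*} [Order.Frame L] {X : Type*} (τ : Set (X → L)) (x : X) : LPt τ :=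
  ⟨fun μ => μ.1 x,
    ⟨fun S hS h => by simp [sSup_apply], fun S hS hfin h => by simp [sInf_apply]⟩⟩

/-- The image `f^→(μ)` of an `L`-set under a map. -/
def LImage {L : Type*} [Order.Frame L] {X Y : Type*} (f : X → Y) (μ : X → L) : Y → L :=
  fun y => ⨆ x ∈ f ⁻¹' {y}, μ x

/-- The T₀-identification relation: `x ~ y` iff `μ x = μ y` for all `μ ∈ τ`. -/
def t0Rel {L : Type*} [Order.Frame L] {X : Type*} (τ : Set (X → L)) (x y : X) : Prop :=
  ∀ μ ∈ τ, μ x = μ y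

/-- The quotient `X/~`. -/
def T0Quot {L : Type*} [Order.Frame L] {X : Type*} (τ : Set (X → L)) : Type _ :=
  Quot (t0Rel τ)

/-- The quotient map `q : X → X/~`. -/
def t0q {L : Type*} [Order.Frame L] {X : Type*} (τ : Set (X → L)) : X → T0Quot τ :=
  Quot.mk _

/-- The quotient `L`-topology on `X/~`. -/
def t0QuotTop {L : Type*} [Order.Frame L] {X : Type*} (τ : Set (X → L)) :
    Set (T0Quot τ → L) :=
  {ν | ν ∘ t0q τ ∈ τ}

/-- All finite pointwise infima of members of `ζ`. -/
def finInfs {L : Type*} [Order.Frame L] {X : Type*} (ζ : Set (X → L)) : Set (X → L) :=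
  {μ | ∃ F ⊆ ζ, F.Finite ∧ μ = sInf F}

/-- `⟨ζ⟩`: all pointwise suprema of sets of finite pointwise infima of members of `ζ`. -/
def genSupInf {L : Type*} [Order.Frame L] {X : Type*} (ζ : Set (X → L)) : Set (X → L) :=
  {μ | ∃ G ⊆ finInfs ζ, μ = sSup G}

/-- For every T₀ `L`-topological space `(X, τ)`, the space `(pt_L(τ), φ_L(τ))` is a T₀
`L`-topological space, `η_X` is continuous, and `η_X` is an epimorphism in
`L`-**Top₀**. -/
theorem stmt13 {L : Type*} [Order.Frame L] {X : Type*} (τ : Set (X → L))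
    (hτ : IsLTop τ) (hXT0 : IsT0LTop τ) :
    IsLTop (phiTop τ) ∧ IsT0LTop (phiTop τ) ∧
    LCont τ (phiTop τ) (etaPt τ) ∧ IsLEpiT0 τ (phiTop τ) (etaPt τ) := by
  refine ⟨⟨?_, ?_⟩, ?_, ?_, ?_⟩
  · -- closed under sSup
    intro S hS
    set T : Set (X → L) :=
      {m | ∃ h : m ∈ τ, (fun p : LPt τ => p.1 ⟨m, h⟩) ∈ S} with hT
    have hTτ : T ⊆ τ := fun m hm => hm.1
    refine ⟨⟨sSup T, hτ.1 T hTτ⟩, ?_⟩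
    funext p
    rw [p.2.1 T hTτ (hτ.1 T hTτ), sSup_apply]
    apply le_antisymm
    · refine iSup_le fun ν => ?_
      obtain ⟨μ, hμ⟩ := hS ν.2
      have hν : ν.1 p = p.1 μ := by rw [hμ]
      have hmem : μ.1 ∈ T := ⟨μ.2, by
        have : (fun p : LPt τ => p.1 ⟨μ.1, μ.2⟩) = ν.1 := by
          rw [hμ]
        rw [this]; exact ν.2⟩
      calc ν.1 p = p.1 ⟨μ.1, hTτ hmem⟩ := by rw [hν]
        _ ≤ _ := le_iSup (fun m : T => p.1 ⟨m.1, hTτ m.2⟩) ⟨μ.1, hmem⟩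
    · refine iSup_le fun m => ?_
      obtain ⟨h, hmS⟩ := m.2
      have : p.1 ⟨m.1, hTτ m.2⟩ = (⟨fun p : LPt τ => p.1 ⟨m.1, h⟩, hmS⟩ : S).1 p := rfl
      rw [this]
      exact le_iSup (fun ν : S => ν.1 p) _
  · -- closed under finite sInf
    intro S hS hfin
    have hch : ∀ ν : S, ∃ μ : ↥τ, ν.1 = fun p : LPt τ => p.1 μ := fun ν => hS ν.2
    choose c hc using hch
    set F : Set (X → L) := Set.range (fun ν : S => (c ν).1) with hF
    have hFτ : F ⊆ τ := by rintro m ⟨ν, rfl⟩; exact (c ν).2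
    have hFfin : F.Finite := by
      have : Finite S := hfin
      exact Set.finite_range _
    refine ⟨⟨sInf F, hτ.2 F hFτ hFfin⟩, ?_⟩
    funext p
    rw [p.2.2 F hFτ hFfin (hτ.2 F hFτ hFfin), sInf_apply]
    apply le_antisymm
    · refine le_iInf fun m => ?_
      obtain ⟨ν, hν⟩ := m.2
      have : p.1 ⟨m.1, hFτ m.2⟩ = ν.1 p := by
        have h1 : ν.1 p = p.1 (c ν) := by rw [hc ν]
        rw [h1]
        exact congrArg p.1 (Subtype.ext hν.symm)
      rw [this]
      exact iInf_le (fun ν : S => ν.1 p) ν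
    · refine le_iInf fun ν => ?_
      have hmem : (c ν).1 ∈ F := ⟨ν, rfl⟩
      have : ν.1 p = p.1 ⟨(c ν).1, hFτ hmem⟩ := by
        rw [hc ν]
      rw [this]
      exact iInf_le (fun m : F => p.1 ⟨m.1, hFτ m.2⟩) ⟨(c ν).1, hmem⟩
  · -- T0
    intro p q hpq
    have : p.1 ≠ q.1 := fun h => hpq (Subtype.ext h)
    obtain ⟨μ, hμ⟩ : ∃ μ : ↥τ, p.1 μ ≠ q.1 μ := by
      by_contra h
      push_neg at h
      exact this (funext h)
    exact ⟨fun r : LPt τ => r.1 μ, ⟨μ, rfl⟩, hμ⟩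
  · -- continuity of eta
    rintro ν ⟨μ, rfl⟩
    have : (fun p : LPt τ => p.1 μ) ∘ etaPt τ = μ.1 := rfl
    rw [this]; exact μ.2
  · -- epi
    intro Z Δ hΔ hΔT0 g h hg hh hgh
    funext p
    by_contra hne
    obtain ⟨ξ, hξΔ, hξ⟩ := hΔT0 (g p) (h p) hne
    obtain ⟨μ, hμ⟩ := hg ξ hξΔ
    obtain ⟨ν, hν⟩ := hh ξ hξΔ
    have key : μ = ν := by
      apply Subtype.ext
      funext x
      have h1 : (ξ ∘ g) (etaPt τ x) = μ.1 x := by rw [hμ]; rfl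
      have h2 : (ξ ∘ h) (etaPt τ x) = ν.1 x := by rw [hν]; rfl
      have h3 : g (etaPt τ x) = h (etaPt τ x) := congrFun hgh x
      rw [← h1, ← h2]; simp [Function.comp, h3]
    apply hξ
    have h1 : ξ (g p) = p.1 μ := by
      have := congrFun hμ p; exact this
    have h2 : ξ (h p) = p.1 ν := by
      have := congrFun hν p; exact this
    rw [h1, h2, key]
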